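/- For every weighted finite graph G and each natural number 1 ≤ k ≤ N, λ_{N−k+1} ≥ 2·h̄*(k). -/

import Mathlib

open Finset

namespace DualCheeger

variable {N : ℕ}

/-- The degree of a vertex `u`: `d_u = ∑_v w u v`. -/
def degree (w : Fin N → Fin N → ℝ) (u : Fin N) : ℝ := ∑ v, w u v

/-- A weighted finite graph structure on `Fin N`: symmetric nonnegative weights,
no self-loops, and strictly positive degrees. -/
def IsWeightedGraph (w : Fin N → Fin N → ℝ) : Prop :=
  (∀ u v, w u v = w v u) ∧ (∀ u v, 0 ≤ w u v) ∧ (∀ u, w u u = 0) ∧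
    ∀ u, 0 < degree w u

/-- `|E(A,B)| = ∑_{u ∈ A} ∑_{v ∈ B} w u v`. -/
def Ew (w : Fin N → Fin N → ℝ) (A B : Finset (Fin N)) : ℝ :=
  ∑ u ∈ A, ∑ v ∈ B, w u v

/-- `vol(A) = ∑_{u ∈ A} d_u`. -/
def vol (w : Fin N → Fin N → ℝ) (A : Finset (Fin N)) : ℝ := ∑ u ∈ A, degree w u

/-- The expansion `φ(S) = |E(S, Sᶜ)| / vol(S)`. -/
noncomputable def expansion (w : Fin N → Fin N → ℝ) (S : Finset (Fin N)) : ℝ :=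
  Ew w S Sᶜ / vol w S

/-- `φ̄(V₁,V₂) = 2|E(V₁,V₂)| / vol(V₁ ∪ V₂)`. -/
noncomputable def phibar (w : Fin N → Fin N → ℝ) (V₁ V₂ : Finset (Fin N)) : ℝ :=
  2 * Ew w V₁ V₂ / vol w (V₁ ∪ V₂)

/-- A `k`-subpartition: `k` nonempty pairwise disjoint subsets. -/
def IsSubpartition (k : ℕ) (P : Fin k → Finset (Fin N)) : Prop :=
  (∀ i, (P i).Nonempty) ∧ ∀ i j, i ≠ j → Disjoint (P i) (P j)

/-- The `k`-way Cheeger constant `h(k)`. -/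
noncomputable def cheeger (w : Fin N → Fin N → ℝ) (k : ℕ) : ℝ :=
  sInf { x | ∃ P : Fin k → Finset (Fin N), IsSubpartition k P ∧
    x = ⨆ i, expansion w (P i) }

/-- A `k`-sub-bipartition: `k` pairs of subsets, all `2k` subsets pairwise
disjoint, with each union `V_{2i-1} ∪ V_{2i}` nonempty. -/
def IsSubBipartition (k : ℕ) (P : Fin k → Finset (Fin N) × Finset (Fin N)) : Prop :=
  (∀ i, Disjoint (P i).1 (P i).2) ∧
    (∀ i j, i ≠ j → Disjoint ((P i).1 ∪ (P i).2) ((P j).1 ∪ (P j).2)) ∧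
    ∀ i, ((P i).1 ∪ (P i).2).Nonempty

/-- The `k`-way dual Cheeger constant `h̄(k)`. -/
noncomputable def dualCheeger (w : Fin N → Fin N → ℝ) (k : ℕ) : ℝ :=
  sSup { x | ∃ P : Fin k → Finset (Fin N) × Finset (Fin N), IsSubBipartition k P ∧
    x = ⨅ i, phibar w (P i).1 (P i).2 }

/-- `lam` enumerates the eigenvalues of the normalized Laplacian
`Δ f (u) = f u - d_u⁻¹ ∑_v w u v * f v` in nondecreasing order with multiplicity,
witnessed by a `μ`-orthonormal eigenbasis `f`. -/
def IsLapEigenbasis (w : Fin N → Fin N → ℝ) (lam : Fin N → ℝ)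
    (f : Fin N → Fin N → ℝ) : Prop :=
  Monotone lam ∧
    (∀ i j, (∑ u, degree w u * f i u * f j u) = if i = j then (1 : ℝ) else 0) ∧
    ∀ i u, f i u - (degree w u)⁻¹ * ∑ v, w u v * f i v = lam i * f i u

/-- The dual Rayleigh quotient of a function `f : V → ℝ`. -/
noncomputable def dualRayleigh (w : Fin N → Fin N → ℝ) (f : Fin N → ℝ) : ℝ :=
  (1 / 2 * ∑ u, ∑ v, w u v * (f u + f v) ^ 2) / ∑ u, degree w u * f u ^ 2

/-- The dual Rayleigh quotient of a map `F : V → ℝ^k`. -/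
noncomputable def dualRayleighVec (w : Fin N → Fin N → ℝ) {k : ℕ}
    (F : Fin N → EuclideanSpace ℝ (Fin k)) : ℝ :=
  (1 / 2 * ∑ u, ∑ v, w u v * ‖F u + F v‖ ^ 2) / ∑ u, degree w u * ‖F u‖ ^ 2

/-- The rough projective-space distance `d̄_F` between (the projections of)
`F u` and `F v`. -/
noncomputable def dbar {k : ℕ} (F : Fin N → EuclideanSpace ℝ (Fin k))
    (u v : Fin N) : ℝ :=
  min ‖‖F u‖⁻¹ • F u - ‖F v‖⁻¹ • F v‖ ‖‖F u‖⁻¹ • F u + ‖F v‖⁻¹ • F v‖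

/-- The `l²` mass of `F` on `S`: `ℰ_S = ∑_{u ∈ S} d_u ‖F u‖²`. -/
noncomputable def mass (w : Fin N → Fin N → ℝ) {k : ℕ}
    (F : Fin N → EuclideanSpace ℝ (Fin k)) (S : Finset (Fin N)) : ℝ :=
  ∑ u ∈ S, degree w u * ‖F u‖ ^ 2

/-- The distance `d̄_F(v, T)` from a vertex to a set. -/
noncomputable def dbarSet {k : ℕ} (F : Fin N → EuclideanSpace ℝ (Fin k))
    (v : Fin N) (T : Set (Fin N)) : ℝ :=
  sInf { x | ∃ t ∈ T, x = dbar F v t }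

/-- The modified dual Cheeger constant `h̄*(k)`. -/
noncomputable def dualCheegerStar (w : Fin N → Fin N → ℝ) (k : ℕ) : ℝ :=
  sSup { x | ∃ P : Fin k → Finset (Fin N) × Finset (Fin N), IsSubBipartition k P ∧
    x = ⨅ i, (2 * Ew w (P i).1 (P i).2 + 1 / 2 * Ew w ((P i).1 ∪ (P i).2)
        (Finset.univ \ Finset.univ.biUnion (fun j => (P j).1 ∪ (P j).2))) /
      vol w ((P i).1 ∪ (P i).2) }

/-- `G` is bipartite: `V = A ∪ Aᶜ` with no edges inside `A` nor inside `Aᶜ`. -/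
def IsBipartite (w : Fin N → Fin N → ℝ) : Prop :=
  ∃ A : Finset (Fin N), (∀ u ∈ A, ∀ v ∈ A, w u v = 0) ∧
    ∀ u ∈ Aᶜ, ∀ v ∈ Aᶜ, w u v = 0

/-- The equivalence relation generated by adjacency (connected components). -/
def Reach (w : Fin N → Fin N → ℝ) : Fin N → Fin N → Prop :=
  Relation.EqvGen fun u v => 0 < w u v

/-- `w` is the weight function of a weighted cycle on `Fin N`: symmetric,
nonnegative, and positive exactly on consecutive vertices mod `N`. -/
def IsCycleWeight (N : ℕ) (w : Fin N → Fin N → ℝ) : Prop :=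
  (∀ u v, w u v = w v u) ∧ (∀ u v, 0 ≤ w u v) ∧
    ∀ i j : Fin N, 0 < w i j ↔ ((i.val + 1) % N = j.val ∨ (j.val + 1) % N = i.val)

/-- The unweighted cycle on `Fin N`. -/
noncomputable def cycleWeight (N : ℕ) : Fin N → Fin N → ℝ := fun i j =>
  if (i.val + 1) % N = j.val ∨ (j.val + 1) % N = i.val then 1 else 0

section AuxProof

variable {k : ℕ}

lemma Ew_comm {w : Fin N → Fin N → ℝ} (hsym : ∀ u v, w u v = w v u)
    (A B : Finset (Fin N)) : Ew w A B = Ew w B A := by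
  unfold Ew
  rw [Finset.sum_comm]
  exact Finset.sum_congr rfl fun u _ => Finset.sum_congr rfl fun v _ => hsym v u

/-- Signed characteristic function of the pair `P i`. -/
noncomputable def chiP (P : Fin k → Finset (Fin N) × Finset (Fin N)) (i : Fin k)
    (u : Fin N) : ℝ :=
  (if u ∈ (P i).1 then (1 : ℝ) else 0) - (if u ∈ (P i).2 then (1 : ℝ) else 0)

/-- Test function associated to coefficients `c`. -/
noncomputable def gfun (P : Fin k → Finset (Fin N) × Finset (Fin N)) (c : Fin k → ℝ)
    (u : Fin N) : ℝ := ∑ i, c i * chiP P i u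

lemma chiP_eq_zero {P : Fin k → Finset (Fin N) × Finset (Fin N)} {j : Fin k} {u : Fin N}
    (hu : u ∉ (P j).1 ∪ (P j).2) : chiP P j u = 0 := by
  rw [Finset.mem_union] at hu
  push_neg at hu
  simp [chiP, hu.1, hu.2]

lemma gfun_eq_of_mem {P : Fin k → Finset (Fin N) × Finset (Fin N)}
    (hP : IsSubBipartition k P) (c : Fin k → ℝ) {i : Fin k} {u : Fin N}
    (hu : u ∈ (P i).1 ∪ (P i).2) :
    gfun P c u = c i * chiP P i u := by
  unfold gfun
  refine Finset.sum_eq_single i (fun j _ hj => ?_) (fun h => absurd (Finset.mem_univ i) h)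
  rw [chiP_eq_zero (Finset.disjoint_left.mp (hP.2.1 i j (Ne.symm hj)) hu), mul_zero]

lemma gfun_val1 {P : Fin k → Finset (Fin N) × Finset (Fin N)}
    (hP : IsSubBipartition k P) (c : Fin k → ℝ) {i : Fin k} {u : Fin N}
    (hu : u ∈ (P i).1) : gfun P c u = c i := by
  have h2 : u ∉ (P i).2 := Finset.disjoint_left.mp (hP.1 i) hu
  rw [gfun_eq_of_mem hP c (Finset.mem_union_left _ hu)]
  simp [chiP, hu, h2]

lemma gfun_val2 {P : Fin k → Finset (Fin N) × Finset (Fin N)}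
    (hP : IsSubBipartition k P) (c : Fin k → ℝ) {i : Fin k} {u : Fin N}
    (hu : u ∈ (P i).2) : gfun P c u = -c i := by
  have h1 : u ∉ (P i).1 := Finset.disjoint_right.mp (hP.1 i) hu
  rw [gfun_eq_of_mem hP c (Finset.mem_union_right _ hu)]
  simp [chiP, hu, h1]

lemma gfun_sq {P : Fin k → Finset (Fin N) × Finset (Fin N)}
    (hP : IsSubBipartition k P) (c : Fin k → ℝ) {i : Fin k} {u : Fin N}
    (hu : u ∈ (P i).1 ∪ (P i).2) : gfun P c u ^ 2 = c i ^ 2 := by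
  rcases Finset.mem_union.mp hu with h | h
  · rw [gfun_val1 hP c h]
  · rw [gfun_val2 hP c h]; ring

lemma gfun_zero {P : Fin k → Finset (Fin N) × Finset (Fin N)} (c : Fin k → ℝ) {u : Fin N}
    (hu : ∀ j, u ∉ (P j).1 ∪ (P j).2) : gfun P c u = 0 := by
  unfold gfun
  exact Finset.sum_eq_zero fun j _ => by rw [chiP_eq_zero (hu j), mul_zero]

lemma mass_eq {w : Fin N → Fin N → ℝ} {P : Fin k → Finset (Fin N) × Finset (Fin N)}
    (hP : IsSubBipartition k P) (c : Fin k → ℝ) :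
    ∑ u, degree w u * gfun P c u ^ 2
      = ∑ i, c i ^ 2 * vol w ((P i).1 ∪ (P i).2) := by
  have h0 : ∑ u, degree w u * gfun P c u ^ 2
      = ∑ u ∈ Finset.univ.biUnion (fun j => (P j).1 ∪ (P j).2),
          degree w u * gfun P c u ^ 2 := by
    refine (Finset.sum_subset (Finset.subset_univ _) ?_).symm
    intro u _ hu
    have h : ∀ j, u ∉ (P j).1 ∪ (P j).2 := fun j hj =>
      hu (Finset.mem_biUnion.mpr ⟨j, Finset.mem_univ j, hj⟩)
    rw [gfun_zero c h]; ring
  rw [h0, Finset.sum_biUnion (fun i _ j _ hij => hP.2.1 i j hij)]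
  refine Finset.sum_congr rfl fun i _ => ?_
  unfold vol
  rw [Finset.mul_sum]
  exact Finset.sum_congr rfl fun u hu => by rw [gfun_sq hP c hu]; ring

lemma comb_bound {w : Fin N → Fin N → ℝ} (hsym : ∀ u v, w u v = w v u)
    (hnn : ∀ u v, 0 ≤ w u v) {P : Fin k → Finset (Fin N) × Finset (Fin N)}
    (hP : IsSubBipartition k P) (c : Fin k → ℝ) :
    ∑ i, c i ^ 2 * (4 * Ew w (P i).1 (P i).2
        + Ew w ((P i).1 ∪ (P i).2)
          (Finset.univ \ Finset.univ.biUnion fun j => (P j).1 ∪ (P j).2))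
      ≤ 1 / 2 * ∑ u, ∑ v, w u v * (gfun P c u - gfun P c v) ^ 2 := by
  set Vs : Finset (Fin N) :=
    Finset.univ \ Finset.univ.biUnion (fun j => (P j).1 ∪ (P j).2) with hVsdef
  have hVs_not : ∀ v ∈ Vs, ∀ j : Fin k, v ∉ (P j).1 ∪ (P j).2 := by
    intro v hv j hj
    rw [hVsdef, Finset.mem_sdiff] at hv
    exact hv.2 (Finset.mem_biUnion.mpr ⟨j, Finset.mem_univ j, hj⟩)
  have hVs_g : ∀ v ∈ Vs, gfun P c v = 0 := fun v hv => gfun_zero c (hVs_not v hv)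
  have hUVs : ∀ i : Fin k, Disjoint ((P i).1 ∪ (P i).2) Vs := by
    intro i
    rw [Finset.disjoint_right]
    exact fun v hv hu => hVs_not v hv i hu
  set F : Fin N × Fin N → ℝ :=
    fun p => w p.1 p.2 * (gfun P c p.1 - gfun P c p.2) ^ 2 with hFdef
  set T : Fin k → Finset (Fin N × Fin N) := fun i =>
    (((P i).1 ×ˢ (P i).2 ∪ (P i).2 ×ˢ (P i).1) ∪ ((P i).1 ∪ (P i).2) ×ˢ Vs)
      ∪ Vs ×ˢ ((P i).1 ∪ (P i).2) with hTdef
  have hmemT : ∀ (i : Fin k) (p : Fin N × Fin N), p ∈ T i →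
      (p.1 ∈ (P i).1 ∪ (P i).2 ∨ p.1 ∈ Vs) ∧ (p.2 ∈ (P i).1 ∪ (P i).2 ∨ p.2 ∈ Vs) ∧
        (p.1 ∈ (P i).1 ∪ (P i).2 ∨ p.2 ∈ (P i).1 ∪ (P i).2) := by
    intro i p hp
    simp only [hTdef, Finset.mem_union, Finset.mem_product] at hp ⊢
    tauto
  have hTdisj : ∀ i j : Fin k, i ≠ j → Disjoint (T i) (T j) := by
    intro i j hij
    rw [Finset.disjoint_left]
    intro p hpi hpj
    obtain ⟨hi1, hi2, hi3⟩ := hmemT i p hpi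
    obtain ⟨hj1, hj2, hj3⟩ := hmemT j p hpj
    have hUU := hP.2.1 i j hij
    rcases hi3 with h | h
    · rcases hj1 with h' | h'
      · exact Finset.disjoint_left.mp hUU h h'
      · exact Finset.disjoint_left.mp (hUVs i) h h'
    · rcases hj2 with h' | h'
      · exact Finset.disjoint_left.mp hUU h h'
      · exact Finset.disjoint_left.mp (hUVs i) h h'
  have hTi : ∀ i : Fin k, ∑ p ∈ T i, F p
      = c i ^ 2 * (8 * Ew w (P i).1 (P i).2 + 2 * Ew w ((P i).1 ∪ (P i).2) Vs) := by
    intro i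
    have d1 : Disjoint ((P i).1 ×ˢ (P i).2) ((P i).2 ×ˢ (P i).1) := by
      rw [Finset.disjoint_left]
      intro p hp hq
      rw [Finset.mem_product] at hp hq
      exact Finset.disjoint_left.mp (hP.1 i) hp.1 hq.1
    have d2 : Disjoint ((P i).1 ×ˢ (P i).2 ∪ (P i).2 ×ˢ (P i).1)
        (((P i).1 ∪ (P i).2) ×ˢ Vs) := by
      rw [Finset.disjoint_left]
      intro p hp hq
      rw [Finset.mem_product] at hq
      rw [Finset.mem_union, Finset.mem_product, Finset.mem_product] at hp
      rcases hp with h | h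
      · exact Finset.disjoint_left.mp (hUVs i) (Finset.mem_union_right _ h.2) hq.2
      · exact Finset.disjoint_left.mp (hUVs i) (Finset.mem_union_left _ h.2) hq.2
    have d3 : Disjoint (((P i).1 ×ˢ (P i).2 ∪ (P i).2 ×ˢ (P i).1)
        ∪ ((P i).1 ∪ (P i).2) ×ˢ Vs) (Vs ×ˢ ((P i).1 ∪ (P i).2)) := by
      rw [Finset.disjoint_left]
      intro p hp hq
      rw [Finset.mem_product] at hq
      rw [Finset.mem_union, Finset.mem_union, Finset.mem_product, Finset.mem_product,
        Finset.mem_product] at hp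
      rcases hp with (h | h) | h
      · exact Finset.disjoint_left.mp (hUVs i) (Finset.mem_union_left _ h.1) hq.1
      · exact Finset.disjoint_left.mp (hUVs i) (Finset.mem_union_right _ h.1) hq.1
      · exact Finset.disjoint_left.mp (hUVs i) h.1 hq.1
    have e1 : ∑ p ∈ (P i).1 ×ˢ (P i).2, F p = 4 * c i ^ 2 * Ew w (P i).1 (P i).2 := by
      rw [Finset.sum_product' (f := fun u v => w u v * (gfun P c u - gfun P c v) ^ 2)]
      unfold Ew
      simp_rw [Finset.mul_sum]
      refine Finset.sum_congr rfl fun u hu => Finset.sum_congr rfl fun v hv => ?_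
      rw [gfun_val1 hP c hu, gfun_val2 hP c hv]; ring
    have e2 : ∑ p ∈ (P i).2 ×ˢ (P i).1, F p = 4 * c i ^ 2 * Ew w (P i).2 (P i).1 := by
      rw [Finset.sum_product' (f := fun u v => w u v * (gfun P c u - gfun P c v) ^ 2)]
      unfold Ew
      simp_rw [Finset.mul_sum]
      refine Finset.sum_congr rfl fun u hu => Finset.sum_congr rfl fun v hv => ?_
      rw [gfun_val2 hP c hu, gfun_val1 hP c hv]; ring
    have e3 : ∑ p ∈ ((P i).1 ∪ (P i).2) ×ˢ Vs, F p
        = c i ^ 2 * Ew w ((P i).1 ∪ (P i).2) Vs := by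
      rw [Finset.sum_product' (f := fun u v => w u v * (gfun P c u - gfun P c v) ^ 2)]
      unfold Ew
      simp_rw [Finset.mul_sum]
      refine Finset.sum_congr rfl fun u hu => Finset.sum_congr rfl fun v hv => ?_
      rw [hVs_g v hv]
      rw [show (gfun P c u - 0) ^ 2 = gfun P c u ^ 2 by ring, gfun_sq hP c hu]
      ring
    have e4 : ∑ p ∈ Vs ×ˢ ((P i).1 ∪ (P i).2), F p
        = c i ^ 2 * Ew w Vs ((P i).1 ∪ (P i).2) := by
      rw [Finset.sum_product' (f := fun u v => w u v * (gfun P c u - gfun P c v) ^ 2)]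
      unfold Ew
      simp_rw [Finset.mul_sum]
      refine Finset.sum_congr rfl fun u hu => Finset.sum_congr rfl fun v hv => ?_
      rw [hVs_g u hu]
      rw [show (0 - gfun P c v) ^ 2 = gfun P c v ^ 2 by ring, gfun_sq hP c hv]
      ring
    rw [hTdef]
    rw [Finset.sum_union d3, Finset.sum_union d2, Finset.sum_union d1, e1, e2, e3, e4,
      Ew_comm hsym (P i).2 (P i).1, Ew_comm hsym Vs ((P i).1 ∪ (P i).2)]
    ring
  have hsub : ∑ i, ∑ p ∈ T i, F p ≤ ∑ u, ∑ v, w u v * (gfun P c u - gfun P c v) ^ 2 := by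
    rw [← Finset.sum_biUnion (fun i _ j _ hij => hTdisj i j hij)]
    rw [← Finset.sum_product' (s := Finset.univ) (t := Finset.univ)
      (f := fun u v => w u v * (gfun P c u - gfun P c v) ^ 2)]
    refine Finset.sum_le_sum_of_subset_of_nonneg ?_ ?_
    · rw [Finset.univ_product_univ]; exact Finset.subset_univ _
    · intro p _ _
      exact mul_nonneg (hnn p.1 p.2) (sq_nonneg _)
  calc ∑ i, c i ^ 2 * (4 * Ew w (P i).1 (P i).2 + Ew w ((P i).1 ∪ (P i).2) Vs)
      = 1 / 2 * ∑ i, ∑ p ∈ T i, F p := by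
        rw [Finset.mul_sum]
        exact Finset.sum_congr rfl fun i _ => by rw [hTi i]; ring
    _ ≤ 1 / 2 * ∑ u, ∑ v, w u v * (gfun P c u - gfun P c v) ^ 2 := by linarith [hsub]

lemma dual_orth {w : Fin N → Fin N → ℝ} {f : Fin N → Fin N → ℝ}
    (horth : ∀ i j, (∑ u, degree w u * f i u * f j u) = if i = j then (1 : ℝ) else 0) :
    ∀ u v : Fin N, degree w v * ∑ m, f m u * f m v = if u = v then (1 : ℝ) else 0 := by
  have h1 : (Matrix.of f * Matrix.diagonal (degree w)) * (Matrix.of f).transpose = 1 := by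
    ext m j
    simp only [Matrix.mul_apply, Matrix.mul_diagonal, Matrix.transpose_apply,
      Matrix.of_apply, Matrix.one_apply, Matrix.diagonal_apply, mul_ite, mul_zero,
      Finset.sum_ite_eq', Finset.mem_univ, if_true]
    rw [← horth m j]
    exact Finset.sum_congr rfl fun u _ => by ring
  have h2 := mul_eq_one_comm.mp h1
  intro u v
  have h3 : ((Matrix.of f).transpose * (Matrix.of f * Matrix.diagonal (degree w))) u v
      = (1 : Matrix (Fin N) (Fin N) ℝ) u v := by rw [h2]
  simp only [Matrix.mul_apply, Matrix.mul_diagonal, Matrix.transpose_apply,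
    Matrix.of_apply, Matrix.one_apply, Matrix.diagonal_apply, mul_ite, mul_zero,
    Finset.sum_ite_eq', Finset.mem_univ, if_true] at h3
  rw [← h3, Finset.mul_sum]
  exact Finset.sum_congr rfl fun m _ => by ring

lemma parseval_aux {w : Fin N → Fin N → ℝ} {f : Fin N → Fin N → ℝ}
    (hdual : ∀ u v : Fin N, degree w v * ∑ m, f m u * f m v = if u = v then (1 : ℝ) else 0)
    (p q : Fin N → ℝ) :
    ∑ m, (∑ u, degree w u * p u * f m u) * (∑ v, degree w v * q v * f m v)
      = ∑ u, degree w u * p u * q u := by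
  have step : ∀ m : Fin N, (∑ u, degree w u * p u * f m u) * (∑ v, degree w v * q v * f m v)
      = ∑ u, ∑ v, (degree w u * p u * f m u) * (degree w v * q v * f m v) :=
    fun m => Finset.sum_mul_sum _ _ _ _
  simp_rw [step]
  rw [Finset.sum_comm]
  have swap2 : ∀ u : Fin N,
      ∑ m, ∑ v, (degree w u * p u * f m u) * (degree w v * q v * f m v)
        = ∑ v, ∑ m, (degree w u * p u * f m u) * (degree w v * q v * f m v) :=
    fun u => Finset.sum_comm
  simp_rw [swap2]
  have inner : ∀ u v : Fin N,
      ∑ m, (degree w u * p u * f m u) * (degree w v * q v * f m v)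
        = (degree w u * p u * q v) * (degree w v * ∑ m, f m u * f m v) := by
    intro u v
    rw [Finset.mul_sum, Finset.mul_sum]
    exact Finset.sum_congr rfl fun m _ => by ring
  simp_rw [inner, hdual, mul_ite, mul_one, mul_zero, Finset.sum_ite_eq,
    Finset.mem_univ, if_true]

lemma eigen_flip {w : Fin N → Fin N → ℝ} {lam : Fin N → ℝ} {f : Fin N → Fin N → ℝ}
    (hsym : ∀ u v, w u v = w v u) (hd : ∀ u, 0 < degree w u)
    (heig : ∀ i u, f i u - (degree w u)⁻¹ * ∑ v, w u v * f i v = lam i * f i u)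
    (g : Fin N → ℝ) (m : Fin N) :
    ∑ u, degree w u * (g u - (degree w u)⁻¹ * ∑ v, w u v * g v) * f m u
      = lam m * ∑ u, degree w u * g u * f m u := by
  have hrow : ∀ v : Fin N, ∑ u, w u v * f m u
      = degree w v * ((1 - lam m) * f m v) := by
    intro v
    have hne : degree w v ≠ 0 := (hd v).ne'
    have h3 : (degree w v)⁻¹ * ∑ x, w v x * f m x = (1 - lam m) * f m v := by
      have := heig m v; ring_nf; ring_nf at this; linarith
    calc ∑ u, w u v * f m u = ∑ u, w v u * f m u :=
          Finset.sum_congr rfl fun u _ => by rw [hsym]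
      _ = degree w v * ((degree w v)⁻¹ * ∑ x, w v x * f m x) := by
          rw [← mul_assoc, mul_inv_cancel₀ hne, one_mul]
      _ = degree w v * ((1 - lam m) * f m v) := by rw [h3]
  have expand : ∑ u, degree w u * (g u - (degree w u)⁻¹ * ∑ v, w u v * g v) * f m u
      = ∑ u, degree w u * g u * f m u - ∑ u, ∑ v, w u v * g v * f m u := by
    rw [← Finset.sum_sub_distrib]
    refine Finset.sum_congr rfl fun u _ => ?_
    have hne : degree w u ≠ 0 := (hd u).ne'
    have hcan : degree w u * ((degree w u)⁻¹ * ∑ v, w u v * g v) = ∑ v, w u v * g v := by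
      rw [← mul_assoc, mul_inv_cancel₀ hne, one_mul]
    calc degree w u * (g u - (degree w u)⁻¹ * ∑ v, w u v * g v) * f m u
        = degree w u * g u * f m u
            - degree w u * ((degree w u)⁻¹ * ∑ v, w u v * g v) * f m u := by ring
      _ = degree w u * g u * f m u - (∑ v, w u v * g v) * f m u := by rw [hcan]
      _ = degree w u * g u * f m u - ∑ v, w u v * g v * f m u := by
          rw [Finset.sum_mul]
  rw [expand]
  have swap : ∑ u, ∑ v, w u v * g v * f m u = ∑ v, g v * ∑ u, w u v * f m u := by
    rw [Finset.sum_comm]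
    refine Finset.sum_congr rfl fun v _ => ?_
    rw [Finset.mul_sum]
    exact Finset.sum_congr rfl fun u _ => by ring
  rw [swap]
  simp_rw [hrow]
  have last : ∑ v, g v * (degree w v * ((1 - lam m) * f m v))
      = (1 - lam m) * ∑ v, degree w v * g v * f m v := by
    rw [Finset.mul_sum]
    exact Finset.sum_congr rfl fun v _ => by ring
  rw [last]; ring

lemma Dg_eq {w : Fin N → Fin N → ℝ} (hd : ∀ u, 0 < degree w u) (g : Fin N → ℝ) :
    ∑ u, degree w u * g u * (g u - (degree w u)⁻¹ * ∑ v, w u v * g v)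
      = ∑ u, degree w u * g u ^ 2 - ∑ u, ∑ v, w u v * (g u * g v) := by
  rw [← Finset.sum_sub_distrib]
  refine Finset.sum_congr rfl fun u _ => ?_
  have hne : degree w u ≠ 0 := (hd u).ne'
  have h1 : degree w u * ((degree w u)⁻¹ * ∑ v, w u v * g v) = ∑ v, w u v * g v := by
    rw [← mul_assoc, mul_inv_cancel₀ hne, one_mul]
  have h2 : g u * ∑ v, w u v * g v = ∑ v, w u v * (g u * g v) := by
    rw [Finset.mul_sum]
    exact Finset.sum_congr rfl fun v _ => by ring
  calc degree w u * g u * (g u - (degree w u)⁻¹ * ∑ v, w u v * g v)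
      = degree w u * g u ^ 2
          - g u * (degree w u * ((degree w u)⁻¹ * ∑ v, w u v * g v)) := by ring
    _ = degree w u * g u ^ 2 - g u * ∑ v, w u v * g v := by rw [h1]
    _ = degree w u * g u ^ 2 - ∑ v, w u v * (g u * g v) := by rw [h2]

lemma dirichlet {w : Fin N → Fin N → ℝ} (hsym : ∀ u v, w u v = w v u) (g : Fin N → ℝ) :
    ∑ u, degree w u * g u ^ 2 - ∑ u, ∑ v, w u v * (g u * g v)
      = 1 / 2 * ∑ u, ∑ v, w u v * (g u - g v) ^ 2 := by
  have hA : ∑ u, ∑ v, w u v * g u ^ 2 = ∑ u, degree w u * g u ^ 2 := by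
    refine Finset.sum_congr rfl fun u _ => ?_
    rw [← Finset.sum_mul]
    rfl
  have hB : ∑ u, ∑ v, w u v * g v ^ 2 = ∑ u, degree w u * g u ^ 2 := by
    rw [Finset.sum_comm]
    refine Finset.sum_congr rfl fun v _ => ?_
    rw [← Finset.sum_mul]
    congr 1
    exact Finset.sum_congr rfl fun u _ => hsym u v
  have key : ∀ u : Fin N, ∑ v, w u v * (g u - g v) ^ 2
      = (∑ v, w u v * g u ^ 2) + (∑ v, w u v * g v ^ 2)
        - 2 * ∑ v, w u v * (g u * g v) := by
    intro u
    have h2s : (2 : ℝ) * ∑ v, w u v * (g u * g v) = ∑ v, 2 * (w u v * (g u * g v)) :=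
      Finset.mul_sum _ _ _
    rw [h2s, ← Finset.sum_add_distrib, ← Finset.sum_sub_distrib]
    exact Finset.sum_congr rfl fun v _ => by ring
  simp_rw [key]
  rw [Finset.sum_sub_distrib, Finset.sum_add_distrib, hA, hB, ← Finset.mul_sum]
  ring

lemma lam_nonneg {w : Fin N → Fin N → ℝ} {lam : Fin N → ℝ} {f : Fin N → Fin N → ℝ}
    (hG : IsWeightedGraph w) (hl : IsLapEigenbasis w lam f) (m : Fin N) : 0 ≤ lam m := by
  obtain ⟨hsym, hnn, -, hd⟩ := hG
  obtain ⟨-, horth, heig⟩ := hl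
  have h1 := eigen_flip hsym hd heig (f m) m
  have h2 : ∑ u, degree w u * (f m u - (degree w u)⁻¹ * ∑ v, w u v * f m v) * f m u
      = ∑ u, degree w u * f m u * (f m u - (degree w u)⁻¹ * ∑ v, w u v * f m v) :=
    Finset.sum_congr rfl fun u _ => by ring
  rw [h2, Dg_eq hd, dirichlet hsym] at h1
  have h3 : ∑ u, degree w u * f m u * f m u = 1 := by rw [horth m m]; simp
  have h4 : (0 : ℝ) ≤ 1 / 2 * ∑ u, ∑ v, w u v * (f m u - f m v) ^ 2 := by
    have : (0 : ℝ) ≤ ∑ u, ∑ v, w u v * (f m u - f m v) ^ 2 :=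
      Finset.sum_nonneg fun u _ => Finset.sum_nonneg fun v _ =>
        mul_nonneg (hnn u v) (sq_nonneg _)
    linarith
  rw [h3, mul_one] at h1
  linarith

end AuxProof

/-- Theorem 4.1: `λ_{N-k+1} ≥ 2 h̄*(k)`. -/
theorem eigenvalue_ge_two_dualCheegerStar {N : ℕ} (w : Fin N → Fin N → ℝ)
    (hG : IsWeightedGraph w) (k : ℕ) (hk : 1 ≤ k) (hkN : k ≤ N)
    (lam : Fin N → ℝ) (f : Fin N → Fin N → ℝ) (hl : IsLapEigenbasis w lam f) :
    2 * dualCheegerStar w k ≤ lam ⟨N - k, by omega⟩ := by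
  obtain ⟨hsym, hnn, hloop, hd⟩ := hG
  obtain ⟨hmono, horth, heig⟩ := hl
  have hdual := dual_orth horth
  have hlamnn : ∀ m, 0 ≤ lam m :=
    lam_nonneg ⟨hsym, hnn, hloop, hd⟩ ⟨hmono, horth, heig⟩
  have hpf : N - k < N := by omega
  have hmain : dualCheegerStar w k ≤ lam ⟨N - k, hpf⟩ / 2 := by
    refine Real.sSup_le ?_ (by linarith [hlamnn ⟨N - k, hpf⟩])
    rintro x ⟨P, hP, rfl⟩
    haveI : Nonempty (Fin k) := ⟨⟨0, by omega⟩⟩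
    have hvolpos : ∀ i, 0 < vol w ((P i).1 ∪ (P i).2) := fun i =>
      Finset.sum_pos (fun u _ => hd u) (hP.2.2 i)
    -- find a nonzero coefficient vector orthogonal to the top eigenfunctions
    obtain ⟨c, hc0, hcker⟩ : ∃ c : Fin k → ℝ, c ≠ 0 ∧
        ∀ m : Fin N, N - k < (m : ℕ) →
          ∑ i, (∑ u, degree w u * chiP P i u * f m u) * c i = 0 := by
      classical
      set M : Matrix (Fin k) (Fin k) ℝ := Matrix.of fun j i =>
        if h : (j : ℕ) < k - 1 then
          ∑ u, degree w u * chiP P i u * f ⟨N - k + 1 + (j : ℕ), by omega⟩ u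
        else 0 with hMdef
      have hdet : M.det = 0 := by
        apply Matrix.det_eq_zero_of_row_eq_zero ⟨k - 1, by omega⟩
        intro i
        rw [hMdef]
        simp only [Matrix.of_apply]
        rw [dif_neg (by omega)]
      obtain ⟨v, hv0, hv⟩ := Matrix.exists_mulVec_eq_zero_iff.mpr hdet
      refine ⟨v, hv0, ?_⟩
      intro m hm
      have hjk : (m : ℕ) - (N - k + 1) < k := by omega
      have hjlt : ((⟨(m : ℕ) - (N - k + 1), hjk⟩ : Fin k) : ℕ) < k - 1 := by
        simp only [Fin.val_mk]; omega
      have h := congrFun hv (⟨(m : ℕ) - (N - k + 1), hjk⟩ : Fin k)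
      calc ∑ i, (∑ u, degree w u * chiP P i u * f m u) * v i
          = ∑ i, M ⟨(m : ℕ) - (N - k + 1), hjk⟩ i * v i := by
            refine Finset.sum_congr rfl fun i _ => ?_
            rw [hMdef]
            simp only [Matrix.of_apply]
            rw [dif_pos hjlt]
            have hidx : (⟨N - k + 1 + ((m : ℕ) - (N - k + 1)), by omega⟩ : Fin N) = m := by
              apply Fin.ext
              simp only [Fin.val_mk]
              omega
            rw [hidx]
        _ = 0 := h
    -- abbreviations
    set Vs : Finset (Fin N) :=
      Finset.univ \ Finset.univ.biUnion (fun j => (P j).1 ∪ (P j).2) with hVsdef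
    set g : Fin N → ℝ := gfun P c with hgdef
    set R : Fin k → ℝ := fun i =>
      (2 * Ew w (P i).1 (P i).2 + 1 / 2 * Ew w ((P i).1 ∪ (P i).2) Vs) /
        vol w ((P i).1 ∪ (P i).2) with hRdef
    show ⨅ i, R i ≤ lam ⟨N - k, hpf⟩ / 2
    have hinf_le : ∀ i, (⨅ j, R j) ≤ R i := fun i =>
      ciInf_le (Set.finite_range R).bddBelow i
    -- the mass of g
    have hmass : ∑ u, degree w u * g u ^ 2
        = ∑ i, c i ^ 2 * vol w ((P i).1 ∪ (P i).2) := mass_eq hP c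
    have hEpos : 0 < ∑ u, degree w u * g u ^ 2 := by
      rw [hmass]
      obtain ⟨i0, hi0⟩ := Function.ne_iff.mp hc0
      refine Finset.sum_pos' (fun i _ => mul_nonneg (sq_nonneg _) (hvolpos i).le)
        ⟨i0, Finset.mem_univ i0,
          mul_pos (lt_of_le_of_ne (sq_nonneg _) (Ne.symm (pow_ne_zero 2 hi0))) (hvolpos i0)⟩
    have hE2 : ∑ u, degree w u * g u * g u = ∑ u, degree w u * g u ^ 2 :=
      Finset.sum_congr rfl fun u _ => by ring
    -- expansion of inner products
    have ha_expand : ∀ m : Fin N, ∑ u, degree w u * g u * f m u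
        = ∑ i, (∑ u, degree w u * chiP P i u * f m u) * c i := by
      intro m
      calc ∑ u, degree w u * g u * f m u
          = ∑ u, ∑ i, (degree w u * chiP P i u * f m u) * c i := by
            refine Finset.sum_congr rfl fun u _ => ?_
            rw [hgdef]
            unfold gfun
            rw [Finset.mul_sum, Finset.sum_mul]
            exact Finset.sum_congr rfl fun i _ => by ring
        _ = ∑ i, ∑ u, (degree w u * chiP P i u * f m u) * c i := Finset.sum_comm
        _ = ∑ i, (∑ u, degree w u * chiP P i u * f m u) * c i :=
            Finset.sum_congr rfl fun i _ => (Finset.sum_mul _ _ _).symm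
    have ha0 : ∀ m : Fin N, N - k < (m : ℕ) →
        (∑ u, degree w u * g u * f m u) = 0 := fun m hm =>
      (ha_expand m).trans (hcker m hm)
    -- Parseval
    have hpars : ∑ m, (∑ u, degree w u * g u * f m u) * (∑ u, degree w u * g u * f m u)
        = ∑ u, degree w u * g u * g u := parseval_aux hdual g g
    -- spectral identity
    have hspec : ∑ m, (∑ u, degree w u * g u * f m u) *
          (lam m * ∑ u, degree w u * g u * f m u)
        = ∑ u, degree w u * g u * (g u - (degree w u)⁻¹ * ∑ v, w u v * g v) := by
      have h := parseval_aux hdual g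
        (fun u => g u - (degree w u)⁻¹ * ∑ v, w u v * g v)
      rw [← h]
      refine Finset.sum_congr rfl fun m _ => ?_
      rw [eigen_flip hsym hd heig g m]
    -- lower bound for the Dirichlet form
    have hcomb := comb_bound hsym hnn hP c
    rw [← hVsdef, ← hgdef] at hcomb
    have hDform : ∑ u, degree w u * g u * (g u - (degree w u)⁻¹ * ∑ v, w u v * g v)
        = 1 / 2 * ∑ u, ∑ v, w u v * (g u - g v) ^ 2 := by
      rw [Dg_eq hd g, dirichlet hsym g]
    have hlow : 2 * (⨅ j, R j) * ∑ u, degree w u * g u ^ 2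
        ≤ ∑ u, degree w u * g u * (g u - (degree w u)⁻¹ * ∑ v, w u v * g v) := by
      rw [hDform, hmass, Finset.mul_sum]
      refine le_trans (Finset.sum_le_sum fun i _ => ?_) hcomb
      have hri : (⨅ j, R j) * vol w ((P i).1 ∪ (P i).2)
          ≤ 2 * Ew w (P i).1 (P i).2 + 1 / 2 * Ew w ((P i).1 ∪ (P i).2) Vs := by
        have := hinf_le i
        rw [hRdef] at this
        exact (le_div_iff₀ (hvolpos i)).mp this
      calc 2 * (⨅ j, R j) * (c i ^ 2 * vol w ((P i).1 ∪ (P i).2))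
          = (2 * c i ^ 2) * ((⨅ j, R j) * vol w ((P i).1 ∪ (P i).2)) := by ring
        _ ≤ (2 * c i ^ 2) *
              (2 * Ew w (P i).1 (P i).2 + 1 / 2 * Ew w ((P i).1 ∪ (P i).2) Vs) :=
            mul_le_mul_of_nonneg_left hri (by positivity)
        _ = c i ^ 2 * (4 * Ew w (P i).1 (P i).2 + Ew w ((P i).1 ∪ (P i).2) Vs) := by
            ring
    -- upper bound via the eigenvalues
    have hhigh : ∑ m, (∑ u, degree w u * g u * f m u) *
          (lam m * ∑ u, degree w u * g u * f m u)
        ≤ lam ⟨N - k, hpf⟩ * ∑ u, degree w u * g u ^ 2 := by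
      rw [← hE2, ← hpars, Finset.mul_sum]
      refine Finset.sum_le_sum fun m _ => ?_
      by_cases hm : N - k < (m : ℕ)
      · rw [ha0 m hm]
        simp
      · have hmle : lam m ≤ lam ⟨N - k, hpf⟩ :=
          hmono (Fin.le_def.mpr (by simp only [Fin.val_mk]; omega))
        have hsq : (0 : ℝ) ≤ (∑ u, degree w u * g u * f m u) *
            (∑ u, degree w u * g u * f m u) := mul_self_nonneg _
        calc (∑ u, degree w u * g u * f m u) * (lam m * ∑ u, degree w u * g u * f m u)
            = lam m * ((∑ u, degree w u * g u * f m u) *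
                (∑ u, degree w u * g u * f m u)) := by ring
          _ ≤ lam ⟨N - k, hpf⟩ * ((∑ u, degree w u * g u * f m u) *
                (∑ u, degree w u * g u * f m u)) :=
              mul_le_mul_of_nonneg_right hmle hsq
    have hchain : 2 * (⨅ j, R j) * ∑ u, degree w u * g u ^ 2
        ≤ lam ⟨N - k, hpf⟩ * ∑ u, degree w u * g u ^ 2 := by
      calc 2 * (⨅ j, R j) * ∑ u, degree w u * g u ^ 2
          ≤ ∑ u, degree w u * g u * (g u - (degree w u)⁻¹ * ∑ v, w u v * g v) := hlow
        _ = ∑ m, (∑ u, degree w u * g u * f m u) *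
              (lam m * ∑ u, degree w u * g u * f m u) := hspec.symm
        _ ≤ lam ⟨N - k, hpf⟩ * ∑ u, degree w u * g u ^ 2 := hhigh
    have h2x : 2 * (⨅ j, R j) ≤ lam ⟨N - k, hpf⟩ :=
      (mul_le_mul_iff_of_pos_right hEpos).mp hchain
    linarith
  show 2 * dualCheegerStar w k ≤ lam ⟨N - k, hpf⟩
  linarith

end DualCheeger
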